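/- Let d, r ∈ ℕ with r ≤ d, ω > 0, B > 0, 1 ≤ q < ∞, and finite order weights γ_u = ω^{|u|} for |u| ≤ r, γ_u = 0 otherwise. Setting c_u = 1 for |u| = r and c_u = 0 otherwise, the ratio | ( Σ_{w⊆u^c} c_{u∪w} γ_{u∪w} B^{|w|} / γ_u )_u |_q / | (c_u)_u |_q is at least (ωB)^r · binom(d,r)^{1−1/q}, where |·|_q denotes the ℓ_q norm over subsets u with γ_u > 0. -/
import Mathlib


/-- Lower bound for the embedding norm for special finite order weights: with
`c_u = 1` iff `|u| = r`, `γ_u = ω^{|u|}` for `|u| ≤ r`, the weighted `ℓ_q`-ratio is at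
least `(ωB)^r · binom(d,r)^{1−1/q}`. -/
theorem stmt15 (d r : ℕ) (hr : r ≤ d) (ω B q : ℝ) (hω : 0 < ω) (hB : 0 < B)
    (hq : 1 ≤ q) :
    let γ : Finset (Fin d) → ℝ := fun u => if u.card ≤ r then ω ^ u.card else 0
    let c : Finset (Fin d) → ℝ := fun u => if u.card = r then 1 else 0
    let a : Finset (Fin d) → ℝ :=
      fun u => ∑ w ∈ uᶜ.powerset, c (u ∪ w) * γ (u ∪ w) * B ^ w.card / γ u
    ((∑ u ∈ Finset.univ.filter (fun u : Finset (Fin d) => u.card ≤ r), |a u| ^ q) ^ (1 / q))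
        / ((∑ u ∈ Finset.univ.filter (fun u : Finset (Fin d) => u.card ≤ r), c u ^ q) ^ (1 / q))
      ≥ (ω * B) ^ r * (d.choose r : ℝ) ^ (1 - 1 / q) := by
  intro γ c a
  have hq0 : (0:ℝ) < q := lt_of_lt_of_le one_pos hq
  have hNpos : (0:ℝ) < (d.choose r : ℝ) := by
    exact_mod_cast Nat.choose_pos hr
  have hcard : (Finset.univ.filter (fun u : Finset (Fin d) => u.card = r)).card = d.choose r := by
    have : Finset.univ.filter (fun u : Finset (Fin d) => u.card = r)
        = Finset.powersetCard r (Finset.univ : Finset (Fin d)) := by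
      ext w; simp [Finset.mem_powersetCard]
    rw [this, Finset.card_powersetCard, Finset.card_univ, Fintype.card_fin]
  have hden : ∑ u ∈ Finset.univ.filter (fun u : Finset (Fin d) => u.card ≤ r), c u ^ q
      = (d.choose r : ℝ) := by
    have h1 : ∀ u ∈ Finset.univ.filter (fun u : Finset (Fin d) => u.card ≤ r),
        c u ^ q = if u.card = r then (1:ℝ) else 0 := by
      intro u _
      by_cases h : u.card = r <;>
        simp [c, h, Real.one_rpow, Real.zero_rpow hq0.ne']
    rw [Finset.sum_congr rfl h1, ← Finset.sum_filter, Finset.filter_filter]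
    have : (Finset.univ.filter (fun u : Finset (Fin d) => u.card ≤ r ∧ u.card = r))
        = Finset.univ.filter (fun u : Finset (Fin d) => u.card = r) := by
      ext u; simp; omega
    simp [this, hcard]
  have hA : a ∅ = (d.choose r : ℝ) * (ω * B) ^ r := by
    have h1 : ∀ w ∈ ((∅ : Finset (Fin d))ᶜ).powerset,
        c (∅ ∪ w) * γ (∅ ∪ w) * B ^ w.card / γ (∅ : Finset (Fin d)) =
        if w.card = r then (ω * B) ^ r else 0 := by
      intro w _
      by_cases h : w.card = r
      · simp [c, γ, h, Nat.zero_le, mul_pow]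
      · simp [c, γ, h]
    show ∑ w ∈ ((∅ : Finset (Fin d))ᶜ).powerset,
        c (∅ ∪ w) * γ (∅ ∪ w) * B ^ w.card / γ ∅ = _
    rw [Finset.sum_congr rfl h1, ← Finset.sum_filter]
    have : (((∅ : Finset (Fin d))ᶜ).powerset.filter (fun w => w.card = r))
        = Finset.univ.filter (fun u : Finset (Fin d) => u.card = r) := by
      ext w; simp
    simp [this, Finset.sum_const, hcard]
  have hmem : (∅ : Finset (Fin d)) ∈
      Finset.univ.filter (fun u : Finset (Fin d) => u.card ≤ r) := by
    simp
  have hnum : |a ∅| ^ q ≤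
      ∑ u ∈ Finset.univ.filter (fun u : Finset (Fin d) => u.card ≤ r), |a u| ^ q := by
    refine Finset.single_le_sum (f := fun u => |a u| ^ q) (fun i _ => ?_) hmem
    positivity
  have habs : |a ∅| = (d.choose r : ℝ) * (ω * B) ^ r := by
    rw [hA, abs_of_pos (by positivity)]
  have hnum2 : (d.choose r : ℝ) * (ω * B) ^ r ≤
      (∑ u ∈ Finset.univ.filter (fun u : Finset (Fin d) => u.card ≤ r), |a u| ^ q) ^ (1/q) := by
    calc (d.choose r : ℝ) * (ω * B) ^ r = (|a ∅| ^ q) ^ (1/q) := by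
          rw [← Real.rpow_mul (abs_nonneg _), mul_one_div_cancel hq0.ne', Real.rpow_one, habs]
      _ ≤ _ := Real.rpow_le_rpow (by positivity) hnum (by positivity)
  rw [ge_iff_le, hden, le_div_iff₀ (by positivity)]
  calc (ω*B)^r * (d.choose r:ℝ)^(1-1/q) * (d.choose r:ℝ)^(1/q)
      = (d.choose r:ℝ) * (ω*B)^r := by
        rw [mul_assoc, ← Real.rpow_add hNpos, sub_add_cancel, Real.rpow_one, mul_comm]
    _ ≤ _ := hnum2
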